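/- Let n ≥ 1 be an integer, let λ₁,…,λₙ and μ₁,…,μₙ be positive real numbers, and let c be a real number, ε > 0, and B, t real numbers with B·t > 1. Suppose ∑_{i=1}^n μᵢ/λᵢ = n·c and ∑_{i=1}^n μᵢ/λᵢ² ≤ n·c + ε, and suppose that for a fixed index k one has ∑_{i≠k} μᵢ < n·c − B·t·ε. Then λₖ/μₖ < 2/((B·t − 1)·ε). -/

import Mathlib

theorem stmt_1 (n : ℕ) (hn : 1 ≤ n) (lam mu : Fin n → ℝ)
    (hlam : ∀ i, 0 < lam i) (hmu : ∀ i, 0 < mu i) (c ε B t : ℝ)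
    (hε : 0 < ε) (hBt : 1 < B * t)
    (h1 : ∑ i, mu i / lam i = n * c)
    (h2 : ∑ i, mu i / (lam i) ^ 2 ≤ n * c + ε)
    (k : Fin n)
    (h3 : ∑ i ∈ Finset.univ.erase k, mu i < n * c - B * t * ε) :
    lam k / mu k < 2 / ((B * t - 1) * ε) := by
  set S := Finset.univ.erase k with hS
  have hsplit1 : mu k / lam k + ∑ i ∈ S, mu i / lam i = n * c :=
    (Finset.add_sum_erase Finset.univ (fun i => mu i / lam i)
      (Finset.mem_univ k)).trans h1
  have hsplit2 : mu k / (lam k) ^ 2 + ∑ i ∈ S, mu i / (lam i) ^ 2 ≤ n * c + ε := by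
    refine le_of_eq_of_le ?_ h2
    exact Finset.add_sum_erase Finset.univ (fun i => mu i / (lam i) ^ 2)
      (Finset.mem_univ k)
  have hkpos : 0 ≤ mu k / (lam k) ^ 2 := div_nonneg (hmu k).le (sq_nonneg _)
  have hpt : ∀ i ∈ S, 2 * (mu i / lam i) - mu i ≤ mu i / (lam i) ^ 2 := by
    intro i _
    have hl := hlam i
    have key : mu i / (lam i) ^ 2 - 2 * (mu i / lam i) + mu i
        = mu i * (1 / lam i - 1) ^ 2 := by
      field_simp; ring
    nlinarith [mul_nonneg (hmu i).le (sq_nonneg (1 / lam i - 1))]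
  have hsum : ∑ i ∈ S, (2 * (mu i / lam i) - mu i) ≤ ∑ i ∈ S, mu i / (lam i) ^ 2 :=
    Finset.sum_le_sum hpt
  rw [Finset.sum_sub_distrib, ← Finset.mul_sum] at hsum
  have key : (B * t - 1) * ε / 2 < mu k / lam k := by linarith
  have hmk := hmu k
  have hlk := hlam k
  have hden : 0 < (B * t - 1) * ε := by nlinarith
  rw [div_lt_div_iff₀ hmk hden]
  rw [div_lt_div_iff₀ two_pos hlk] at key
  nlinarith
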